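/- Let n ≥ 1 and let f be an affine permutation of quasi-period n with Σ_{i=1}^n (f(i) − i) = 0. Then max_{1≤i≤n} (f(i) − i) = max_{1≤i≤n} c_i(f) and min_{1≤i≤n} (f(i) − i) = − max_{1≤i≤n} c_i(f⁻¹). -/

import Mathlib

namespace Stmt4

open Finset

/-- extension of quasi-periodicity to all integer multiples -/
lemma fk {n : ℕ} {f : ℤ ≃ ℤ} (hf : ∀ i : ℤ, f (i + n) = f i + n) :
    ∀ (k : ℤ) (i : ℤ), f (i + k * n) = f i + k * n := by
  have hneg : ∀ i : ℤ, f (i - n) = f i - n := by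
    intro i
    have h := hf (i - n)
    rw [sub_add_cancel] at h
    omega
  intro k
  induction k using Int.induction_on with
  | zero => simp
  | succ k ih =>
      intro i
      have h1 : i + (k + 1 : ℤ) * n = (i + k * n) + n := by ring
      rw [h1, hf, ih]; ring
  | pred k ih =>
      intro i
      have h1 : i + (-k - 1 : ℤ) * n = (i + (-k : ℤ) * n) - n := by ring
      rw [h1, hneg, ih]; ring

lemma fk_symm {n : ℕ} {f : ℤ ≃ ℤ} (hf : ∀ i : ℤ, f (i + n) = f i + n) :
    ∀ (k : ℤ) (v : ℤ), f.symm (v + k * n) = f.symm v + k * n := by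
  intro k v
  apply f.injective
  rw [Equiv.apply_symm_apply, fk hf k, Equiv.apply_symm_apply]

/-- representative in [1,n] -/
def rres (n : ℕ) (x : ℤ) : ℤ := (x - 1) % n + 1

lemma rres_mem {n : ℕ} (hn : 1 ≤ n) (x : ℤ) : rres n x ∈ Finset.Icc (1 : ℤ) n := by
  have h1 : (0:ℤ) < n := by exact_mod_cast hn
  have h2 := Int.emod_nonneg (x - 1) (by omega : (n:ℤ) ≠ 0)
  have h3 := Int.emod_lt_of_pos (x - 1) h1
  rw [mem_Icc]; unfold rres; omega

lemma rres_spec (n : ℕ) (hn : 1 ≤ n) (x : ℤ) : ∃ k : ℤ, x = rres n x + k * n := by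
  refine ⟨(x - 1) / n, ?_⟩
  unfold rres
  rw [mul_comm]
  have := Int.mul_ediv_add_emod (x - 1) n
  omega

lemma rres_per (n : ℕ) (x k : ℤ) : rres n (x + k * n) = rres n x := by
  unfold rres
  have : x + k * n - 1 = (x - 1) + k * n := by ring
  rw [this, Int.add_mul_emod_self_right]

lemma rres_fix {n : ℕ} {x : ℤ} (hx : x ∈ Finset.Icc (1 : ℤ) n) : rres n x = x := by
  rw [mem_Icc] at hx
  have : (x - 1) % n = x - 1 := Int.emod_eq_of_lt (by omega) (by omega)
  unfold rres; omega


section Counting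

variable (f : ℤ ≃ ℤ) (C : ℤ)

/-- number of j > p with f j ≤ u (window version) -/
noncomputable def Uc (p u : ℤ) : Finset ℤ := (Finset.Ioc p (u + C)).filter (fun j => f j ≤ u)

/-- number of j ≤ p with f j > u (window version) -/
noncomputable def Lc (p u : ℤ) : Finset ℤ := (Finset.Ioc (u - C) p).filter (fun j => u < f j)

variable {f C}
variable (hC1 : ∀ x : ℤ, f x ≤ x + C) (hC2 : ∀ x : ℤ, x ≤ f x + C)

include hC2 in
lemma Uc_eq {u M : ℤ} (hM : u + C ≤ M) (p : ℤ) :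
    Uc f C p u = (Finset.Ioc p M).filter (fun j => f j ≤ u) := by
  ext j
  simp only [Uc, mem_filter, mem_Ioc]
  constructor
  · rintro ⟨⟨h1, h2⟩, h3⟩
    exact ⟨⟨h1, by omega⟩, h3⟩
  · rintro ⟨⟨h1, h2⟩, h3⟩
    have := hC2 j
    exact ⟨⟨h1, by omega⟩, h3⟩

include hC1 in
lemma Lc_eq {u m : ℤ} (hm : m ≤ u - C) (p : ℤ) :
    Lc f C p u = (Finset.Ioc m p).filter (fun j => u < f j) := by
  ext j
  simp only [Lc, mem_filter, mem_Ioc]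
  constructor
  · rintro ⟨⟨h1, h2⟩, h3⟩
    exact ⟨⟨by omega, h2⟩, h3⟩
  · rintro ⟨⟨h1, h2⟩, h3⟩
    have := hC1 j
    exact ⟨⟨by omega, h2⟩, h3⟩

lemma card_filter_feq (S : Finset ℤ) (v : ℤ) :
    (S.filter (fun j => f j = v)).card = if f.symm v ∈ S then 1 else 0 := by
  have h : S.filter (fun j => f j = v) = S.filter (fun j => j = f.symm v) := by
    apply Finset.filter_congr
    intro j _
    simp [Equiv.apply_eq_iff_eq_symm_apply]
  rw [h, Finset.filter_eq']
  split_ifs <;> simp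

lemma card_filter_le_succ (S : Finset ℤ) (u : ℤ) :
    (S.filter (fun j => f j ≤ u + 1)).card
      = (S.filter (fun j => f j ≤ u)).card + (if f.symm (u + 1) ∈ S then 1 else 0) := by
  rw [← card_filter_feq (f := f)]
  rw [← Finset.card_union_of_disjoint]
  · congr 1
    rw [← Finset.filter_or]
    apply Finset.filter_congr
    intro j _
    constructor
    · intro h; omega
    · rintro (h | h) <;> omega
  · rw [Finset.disjoint_left]
    intro a ha hb
    simp only [mem_filter] at ha hb
    omega

lemma card_filter_lt_succ (S : Finset ℤ) (u : ℤ) :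
    (S.filter (fun j => u < f j)).card
      = (S.filter (fun j => u + 1 < f j)).card + (if f.symm (u + 1) ∈ S then 1 else 0) := by
  rw [← card_filter_feq (f := f)]
  rw [← Finset.card_union_of_disjoint]
  · congr 1
    rw [← Finset.filter_or]
    apply Finset.filter_congr
    intro j _
    constructor
    · intro h; omega
    · rintro (h | h) <;> omega
  · rw [Finset.disjoint_left]
    intro a ha hb
    simp only [mem_filter] at ha hb
    omega

include hC1 hC2 in
lemma step_u (p u : ℤ) :
    ((Uc f C p (u + 1)).card : ℤ) - (Lc f C p (u + 1)).card
      = ((Uc f C p u).card : ℤ) - (Lc f C p u).card + 1 := by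
  have hU1 : Uc f C p (u + 1) = (Finset.Ioc p (u + 1 + C)).filter (fun j => f j ≤ u + 1) := rfl
  have hU0 := Uc_eq hC2 (u := u) (M := u + 1 + C) (by omega) p
  have hL1 : Lc f C p (u + 1) = (Finset.Ioc (u + 1 - C) p).filter (fun j => u + 1 < f j) := rfl
  have hL1' := Lc_eq hC1 (u := u + 1) (m := u - C) (by omega) p
  have hL0 : Lc f C p u = (Finset.Ioc (u - C) p).filter (fun j => u < f j) := rfl
  have hsymm := hC1 (f.symm (u + 1))
  rw [Equiv.apply_symm_apply] at hsymm
  have hsymm2 := hC2 (f.symm (u + 1))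
  rw [Equiv.apply_symm_apply] at hsymm2
  have e1 := card_filter_le_succ (f := f) (Finset.Ioc p (u + 1 + C)) u
  have e2 := card_filter_lt_succ (f := f) (Finset.Ioc (u - C) p) u
  rw [hU1, hU0, hL1', hL0, e1, e2]
  simp only [mem_Ioc]
  by_cases h : p < f.symm (u + 1)
  · rw [if_pos ⟨h, by omega⟩, if_neg (by omega)]
    push_cast; ring
  · rw [if_neg (by omega), if_pos ⟨by omega, by omega⟩]
    push_cast; ring

lemma Ioc_insert_left' {a b : ℤ} (h : a < b) :
    Finset.Ioc a b = insert (a + 1) (Finset.Ioc (a + 1) b) := by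
  ext j
  simp only [Finset.mem_insert, mem_Ioc]
  omega

include hC1 hC2 in
lemma step_p (p u : ℤ) :
    ((Uc f C (p + 1) u).card : ℤ) - (Lc f C (p + 1) u).card
      = ((Uc f C p u).card : ℤ) - (Lc f C p u).card - 1 := by
  have hCnn : 0 ≤ 2 * C := by
    have h1 := hC1 0; have h2 := hC2 0; omega
  -- common windows
  set M := max (u + C) (p + 1) with hM
  set m := min (u - C) p with hm
  have hU0 := Uc_eq hC2 (u := u) (M := M) (le_max_left _ _) p
  have hU1 := Uc_eq hC2 (u := u) (M := M) (le_max_left _ _) (p + 1)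
  have hL0 := Lc_eq hC1 (u := u) (m := m) (min_le_left _ _) p
  have hL1 := Lc_eq hC1 (u := u) (m := m) (min_le_left _ _) (p + 1)
  have hsplitU : Finset.Ioc p M = insert (p + 1) (Finset.Ioc (p + 1) M) :=
    Ioc_insert_left' (by omega)
  have hsplitL : Finset.Ioc m (p + 1) = insert (p + 1) (Finset.Ioc m p) := by
    ext j
    simp only [Finset.mem_insert, mem_Ioc]
    have : m ≤ p := min_le_right _ _
    omega
  have hnotmemU : p + 1 ∉ Finset.Ioc (p + 1) M := by simp
  have hnotmemL : p + 1 ∉ Finset.Ioc m p := by simp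
  rw [hU0, hU1, hL0, hL1, hsplitU, hsplitL, Finset.filter_insert, Finset.filter_insert]
  by_cases h : f (p + 1) ≤ u
  · rw [if_pos h, if_neg (by omega), Finset.card_insert_of_notMem (by simp [hnotmemU, Finset.mem_filter])]
    push_cast; ring
  · rw [if_neg h, if_pos (by omega), Finset.card_insert_of_notMem (by simp [hnotmemL, Finset.mem_filter])]
    push_cast; ring

end Counting


section Base

variable {n : ℕ} {f : ℤ ≃ ℤ} {C : ℤ}

lemma sum_win (hf : ∀ i : ℤ, f (i + n) = f i + n)
    (h0 : ∑ i ∈ Finset.Icc (1 : ℤ) n, (f i - i) = 0) :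
    ∀ m : ℕ, ∑ j ∈ Finset.Ioc (0 : ℤ) (m * n), (f j - j) = 0 := by
  have hIcc : Finset.Icc (1 : ℤ) n = Finset.Ioc (0 : ℤ) n := by
    ext j; simp only [Finset.mem_Icc, Finset.mem_Ioc]; omega
  intro m
  induction m with
  | zero => simp
  | succ m ih =>
      have hmn : (0 : ℤ) ≤ m * n := by positivity
      have hsplit : ((m + 1 : ℕ) : ℤ) * n = m * n + n := by push_cast; ring
      rw [hsplit, ← Finset.Ioc_union_Ioc_eq_Ioc hmn (by omega : (m : ℤ) * n ≤ m * n + n),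
        Finset.sum_union]
      · have hmap : Finset.Ioc ((m : ℤ) * n) ((m : ℤ) * n + n)
            = (Finset.Ioc (0 : ℤ) n).map (addLeftEmbedding ((m : ℤ) * n)) := by
          rw [Finset.map_add_left_Ioc]
          norm_num
        rw [hmap, Finset.sum_map]
        have : ∀ j ∈ Finset.Ioc (0 : ℤ) n,
            (f (addLeftEmbedding ((m : ℤ) * n) j) - addLeftEmbedding ((m : ℤ) * n) j)
              = f j - j := by
          intro j _
          have : f ((m : ℤ) * n + j) = f j + m * n := by
            rw [add_comm ((m : ℤ) * n) j, fk hf]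
          simp only [addLeftEmbedding_apply, this]
          ring
        rw [Finset.sum_congr rfl this, ← hIcc, h0, ih, add_zero]
      · rw [Finset.disjoint_left]
        intro a ha hb
        simp only [Finset.mem_Ioc] at ha hb
        omega

set_option maxHeartbeats 1000000 in
lemma base (hn : 1 ≤ n) (hf : ∀ i : ℤ, f (i + n) = f i + n)
    (h0 : ∑ i ∈ Finset.Icc (1 : ℤ) n, (f i - i) = 0)
    (hC1 : ∀ x : ℤ, f x ≤ x + C) (hC2 : ∀ x : ℤ, x ≤ f x + C) :
    (Uc f C 0 0).card = (Lc f C 0 0).card := by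
  have hC0 : 0 ≤ C := by have h1 := hC1 0; have h2 := hC2 0; omega
  set K : ℕ := (C + 1).toNat with hKdef
  have hK : (K : ℤ) = C + 1 := Int.toNat_of_nonneg (by omega)
  set N : ℤ := (K : ℤ) * n with hNdef
  have hCN : C + 1 ≤ N := by
    calc C + 1 = (C + 1) * 1 := by ring
    _ ≤ (C + 1) * (n : ℤ) := by
        apply mul_le_mul_of_nonneg_left (by exact_mod_cast hn) (by omega)
    _ = N := by rw [hNdef, hK]
  have hN1 : 1 ≤ N := by omega
  set S : Finset ℤ := Finset.Ioc (0 : ℤ) N with hSdef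
  set T : Finset ℤ := S.image f with hTdef
  -- membership in T
  have hmemT : ∀ v : ℤ, v ∈ T ↔ (0 < f.symm v ∧ f.symm v ≤ N) := by
    intro v
    simp only [hTdef, Finset.mem_image, hSdef, Finset.mem_Ioc]
    constructor
    · rintro ⟨j, ⟨h1, h2⟩, rfl⟩
      simpa using ⟨h1, h2⟩
    · rintro ⟨h1, h2⟩
      exact ⟨f.symm v, ⟨h1, h2⟩, by simp⟩
  have hshift : ∀ v : ℤ, f.symm (v + N) = f.symm v + N := by
    intro v
    have := fk_symm hf (K : ℤ) v
    simpa [hNdef] using this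
  have hsymm_ub : ∀ v : ℤ, f.symm v ≤ v + C := by
    intro v
    have := hC2 (f.symm v)
    simpa using this
  have hsymm_lb : ∀ v : ℤ, v - C ≤ f.symm v := by
    intro v
    have := hC1 (f.symm v)
    simp only [Equiv.apply_symm_apply] at this
    omega
  have hshift' : ∀ v : ℤ, f.symm v = f.symm (v - N) + N := by
    intro v
    have := hshift (v - N)
    rw [sub_add_cancel] at this
    omega
  -- sums are equal
  have hsum0 : ∑ j ∈ S, (f j - j) = 0 := sum_win hf h0 K
  have hsumT : ∑ v ∈ T, v = ∑ j ∈ S, j := by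
    rw [hTdef, Finset.sum_image (fun x _ y _ h => f.injective h)]
    have : ∑ j ∈ S, f j = ∑ j ∈ S, (j + (f j - j)) := by
      apply Finset.sum_congr rfl; intro j _; ring
    rw [this, Finset.sum_add_distrib, hsum0, add_zero]
  have hcardT : T.card = S.card := Finset.card_image_of_injective _ f.injective
  -- the four boundary sets
  set Inlo : Finset ℤ := T.filter (fun v => v ≤ 0) with hInlo
  set Inhi : Finset ℤ := T.filter (fun v => N < v) with hInhi
  set Outlo : Finset ℤ := S.filter (fun v => f.symm v ≤ 0) with hOutlo
  set Outhi : Finset ℤ := S.filter (fun v => N < f.symm v) with hOuthi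
  have hdiffT : T \ S = Inlo ∪ Inhi := by
    ext v
    simp only [Finset.mem_sdiff, Finset.mem_union, hInlo, hInhi, Finset.mem_filter,
      hSdef, Finset.mem_Ioc]
    constructor
    · rintro ⟨hT, hns⟩
      by_cases h : v ≤ 0
      · exact Or.inl ⟨hT, h⟩
      · exact Or.inr ⟨hT, by omega⟩
    · rintro (⟨hT, h⟩ | ⟨hT, h⟩) <;> exact ⟨hT, by omega⟩
  have hdiffS : S \ T = Outlo ∪ Outhi := by
    ext v
    simp only [Finset.mem_sdiff, Finset.mem_union, hOutlo, hOuthi, Finset.mem_filter]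
    rw [hmemT v]
    constructor
    · rintro ⟨hS, hns⟩
      by_cases h : f.symm v ≤ 0
      · exact Or.inl ⟨hS, h⟩
      · exact Or.inr ⟨hS, by omega⟩
    · rintro (⟨hS, h⟩ | ⟨hS, h⟩) <;> exact ⟨hS, fun hc => by omega⟩
  have hdisj1 : Disjoint Inlo Inhi := by
    rw [Finset.disjoint_left]
    intro a ha hb
    simp only [hInlo, hInhi, Finset.mem_filter] at ha hb
    omega
  have hdisj2 : Disjoint Outlo Outhi := by
    rw [Finset.disjoint_left]
    intro a ha hb
    simp only [hOutlo, hOuthi, Finset.mem_filter] at ha hb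
    have h1 := hsymm_ub a
    have h2 := hsymm_lb a
    omega
  -- sums over symmetric differences are equal
  have hsd : ∑ v ∈ T \ S, v = ∑ v ∈ S \ T, v := by
    have e1 : ∑ v ∈ T \ (T ∩ S), v + ∑ v ∈ T ∩ S, v = ∑ v ∈ T, v :=
      Finset.sum_sdiff Finset.inter_subset_left
    have e2 : ∑ v ∈ S \ (S ∩ T), v + ∑ v ∈ S ∩ T, v = ∑ v ∈ S, v :=
      Finset.sum_sdiff Finset.inter_subset_left
    rw [Finset.sdiff_inter_self_left] at e1 e2
    have e3 : T ∩ S = S ∩ T := Finset.inter_comm T S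
    rw [e3] at e1
    omega
  -- shift identities
  have hInhi_img : Inhi = Outlo.image (fun v => v + N) := by
    ext v
    simp only [hInhi, hOutlo, Finset.mem_filter, Finset.mem_image]
    constructor
    · rintro ⟨hT, hv⟩
      rw [hmemT v] at hT
      have hfs := hshift' v
      have hub := hsymm_ub v
      have hlb := hsymm_lb v
      refine ⟨v - N, ⟨?_, by omega⟩, by ring⟩
      simp only [hSdef, Finset.mem_Ioc]
      omega
    · rintro ⟨w, ⟨hwS, hw0⟩, rfl⟩
      simp only [hSdef, Finset.mem_Ioc] at hwS
      have hfs : f.symm (w + N) = f.symm w + N := hshift w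
      have hub := hsymm_ub w
      have hlb := hsymm_lb w
      constructor
      · rw [hmemT]
        omega
      · omega
  have hOuthi_img : Outhi = Inlo.image (fun v => v + N) := by
    ext v
    simp only [hOuthi, hInlo, Finset.mem_filter, Finset.mem_image]
    constructor
    · rintro ⟨hvS, hv⟩
      simp only [hSdef, Finset.mem_Ioc] at hvS
      have hfs := hshift' v
      have hub := hsymm_ub v
      have hlb := hsymm_lb v
      refine ⟨v - N, ⟨?_, by omega⟩, by ring⟩
      rw [hmemT]
      omega
    · rintro ⟨w, ⟨hwT, hw0⟩, rfl⟩
      rw [hmemT] at hwT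
      have hfs : f.symm (w + N) = f.symm w + N := hshift w
      have hub := hsymm_ub w
      have hlb := hsymm_lb w
      constructor
      · simp only [hSdef, Finset.mem_Ioc]
        omega
      · omega
  have hinj : ∀ (s : Finset ℤ), (s.image (fun v => v + N)).card = s.card := by
    intro s
    apply Finset.card_image_of_injective
    exact add_left_injective N
  have hsum_shift : ∀ (s : Finset ℤ),
      ∑ v ∈ s.image (fun v => v + N), v = ∑ v ∈ s, v + s.card * N := by
    intro s
    rw [Finset.sum_image (fun a _ b _ h => by omega : ∀ a ∈ s, ∀ b ∈ s, a + N = b + N → a = b)]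
    rw [Finset.sum_add_distrib, Finset.sum_const, nsmul_eq_mul]
  -- put it all together
  have hfinal : (Outlo.card : ℤ) = (Inlo.card : ℤ) := by
    have h1 : ∑ v ∈ T \ S, v = ∑ v ∈ Inlo, v + (∑ v ∈ Outlo, v + Outlo.card * N) := by
      rw [hdiffT, Finset.sum_union hdisj1, hInhi_img, hsum_shift]
    have h2 : ∑ v ∈ S \ T, v = ∑ v ∈ Outlo, v + (∑ v ∈ Inlo, v + Inlo.card * N) := by
      rw [hdiffS, Finset.sum_union hdisj2, hOuthi_img, hsum_shift]
    rw [h1, h2] at hsd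
    have hNne : (0:ℤ) < N := by omega
    have := mul_right_cancel₀ (by omega : N ≠ 0) (by omega :
      (Outlo.card : ℤ) * N = (Inlo.card : ℤ) * N)
    exact this
  -- identify Inlo with Uc and Outlo with Lc
  have hUcard : Inlo.card = (Uc f C 0 0).card := by
    have himg : Inlo = ((S.filter (fun j => f j ≤ 0)).image f) := by
      rw [hInlo, hTdef, Finset.filter_image]
    have hset : S.filter (fun j => f j ≤ 0) = Uc f C 0 0 := by
      ext j
      simp only [Uc, hSdef, Finset.mem_filter, Finset.mem_Ioc, zero_add]
      constructor
      · rintro ⟨⟨h1, h2⟩, h3⟩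
        have := hC2 j
        exact ⟨⟨h1, by omega⟩, h3⟩
      · rintro ⟨⟨h1, h2⟩, h3⟩
        exact ⟨⟨h1, by omega⟩, h3⟩
    rw [himg, Finset.card_image_of_injective _ f.injective, hset]
  have hLcard : Outlo.card = (Lc f C 0 0).card := by
    have himg : Outlo = ((Lc f C 0 0).image f) := by
      ext v
      simp only [hOutlo, Lc, Finset.mem_filter, Finset.mem_image, Finset.mem_Ioc, zero_sub]
      constructor
      · rintro ⟨hvS, hv⟩
        simp only [hSdef, Finset.mem_Ioc] at hvS
        have hlb := hsymm_lb v
        refine ⟨f.symm v, ⟨⟨by omega, hv⟩, by simpa using hvS.1⟩, by simp⟩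
      · rintro ⟨j, ⟨⟨hj1, hj2⟩, hj3⟩, rfl⟩
        have := hC1 j
        constructor
        · simp only [hSdef, Finset.mem_Ioc]
          omega
        · simpa using hj2
    rw [himg, Finset.card_image_of_injective _ f.injective]
  omega

end Base


section KeyMain

variable {n : ℕ} {f : ℤ ≃ ℤ} {C : ℤ}

lemma key (hn : 1 ≤ n) (hf : ∀ i : ℤ, f (i + n) = f i + n)
    (h0 : ∑ i ∈ Finset.Icc (1 : ℤ) n, (f i - i) = 0)
    (hC1 : ∀ x : ℤ, f x ≤ x + C) (hC2 : ∀ x : ℤ, x ≤ f x + C) :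
    ∀ p u : ℤ, ((Uc f C p u).card : ℤ) - (Lc f C p u).card = u - p := by
  have hb := base hn hf h0 hC1 hC2
  have hp0 : ∀ p : ℤ, ((Uc f C p 0).card : ℤ) - (Lc f C p 0).card = -p := by
    intro p
    induction p using Int.induction_on with
    | zero => rw [hb]; ring
    | succ k ih =>
        have := step_p hC1 hC2 k 0
        omega
    | pred k ih =>
        have := step_p hC1 hC2 (-k - 1) 0
        have he : (-(k:ℤ) - 1) + 1 = -k := by ring
        rw [he] at this
        omega
  intro p u
  induction u using Int.induction_on with
  | zero => have := hp0 p; omega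
  | succ k ih =>
      have := step_u hC1 hC2 p k
      omega
  | pred k ih =>
      have := step_u hC1 hC2 p (-k - 1)
      have he : (-(k:ℤ) - 1) + 1 = -k := by ring
      rw [he] at this
      omega

lemma bF_mem (hC1 : ∀ x : ℤ, f x ≤ x + C) (i : ℤ) : i ∈ Lc f C i (f i - 1) := by
  simp only [Lc, Finset.mem_filter, Finset.mem_Ioc]
  have := hC1 i
  omega

lemma code_ncard (hC2 : ∀ x : ℤ, x ≤ f x + C) (i : ℤ) :
    ({j : ℤ | i < j ∧ f j < f i}.ncard : ℤ) = ((Uc f C i (f i - 1)).card : ℤ) := by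
  have hset : {j : ℤ | i < j ∧ f j < f i} = ↑(Uc f C i (f i - 1)) := by
    ext j
    simp only [Set.mem_setOf_eq, Finset.coe_filter, Uc, Finset.mem_Ioc, Set.mem_setOf_eq]
    have := hC2 j
    omega
  rw [hset, Set.ncard_coe_finset]

lemma code_per (hf : ∀ i : ℤ, f (i + n) = f i + n) (k i : ℤ) :
    (Uc f C (i + k * n) (f (i + k * n) - 1)).card = (Uc f C i (f i - 1)).card := by
  rw [fk hf k i]
  apply Finset.card_bij (fun j _ => j - k * n)
  · intro a ha
    simp only [Uc, Finset.mem_filter, Finset.mem_Ioc] at ha ⊢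
    have hfa : f (a - k * n) = f a - k * n := by
      have := fk hf k (a - k * n)
      rw [sub_add_cancel] at this
      omega
    omega
  · intro a _ b _ h
    omega
  · intro b hb
    refine ⟨b + k * n, ?_, by ring⟩
    simp only [Uc, Finset.mem_filter, Finset.mem_Ioc] at hb ⊢
    have hfb : f (b + k * n) = f b + k * n := fk hf k b
    omega

lemma main (n : ℕ) (hn : 1 ≤ n) (f : ℤ ≃ ℤ)
    (hf : ∀ i : ℤ, f (i + n) = f i + n)
    (h0 : ∑ i ∈ Finset.Icc (1 : ℤ) n, (f i - i) = 0)
    (ne : (Finset.Icc (1 : ℤ) n).Nonempty) :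
    (Finset.Icc (1 : ℤ) n).sup' ne (fun i => f i - i)
      = (Finset.Icc (1 : ℤ) n).sup' ne
          (fun i => ({j : ℤ | i < j ∧ f j < f i}.ncard : ℤ)) := by
  set C : ℤ := (Finset.Icc (1 : ℤ) n).sup' ne (fun i => |f i - i|) with hCdef
  have hC : ∀ x : ℤ, |f x - x| ≤ C := by
    intro x
    obtain ⟨k, hk⟩ := rres_spec n hn x
    have hmem := rres_mem hn x
    have hfr : f x - x = f (rres n x) - rres n x := by
      conv_lhs => rw [hk, fk hf k]
      ring
    rw [hfr]
    exact Finset.le_sup' (fun i => |f i - i|) hmem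
  have hC1 : ∀ x : ℤ, f x ≤ x + C := by
    intro x; have := abs_le.mp (hC x); omega
  have hC2 : ∀ x : ℤ, x ≤ f x + C := by
    intro x; have := abs_le.mp (hC x); omega
  have hkey := key hn hf h0 hC1 hC2
  have hrw : (Finset.Icc (1 : ℤ) n).sup' ne (fun i => ({j : ℤ | i < j ∧ f j < f i}.ncard : ℤ))
      = (Finset.Icc (1 : ℤ) n).sup' ne (fun i => ((Uc f C i (f i - 1)).card : ℤ)) :=
    Finset.sup'_congr ne rfl (fun i _ => code_ncard hC2 i)
  rw [hrw]
  obtain ⟨i₀, hi₀mem, hi₀⟩ :=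
    Finset.exists_mem_eq_sup' ne (fun i => ((Uc f C i (f i - 1)).card : ℤ))
  apply le_antisymm
  · apply Finset.sup'_le
    intro i hi
    have hid := hkey i (f i - 1)
    have hb1 : 1 ≤ (Lc f C i (f i - 1)).card :=
      Finset.card_pos.mpr ⟨i, bF_mem hC1 i⟩
    have hle : f i - i ≤ ((Uc f C i (f i - 1)).card : ℤ) := by omega
    exact le_trans hle (Finset.le_sup' (fun i => ((Uc f C i (f i - 1)).card : ℤ)) hi)
  · rw [hi₀]
    have hglob : ∀ j : ℤ, (Uc f C j (f j - 1)).card ≤ (Uc f C i₀ (f i₀ - 1)).card := by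
      intro j
      obtain ⟨k, hk⟩ := rres_spec n hn j
      have hper : (Uc f C j (f j - 1)).card = (Uc f C (rres n j) (f (rres n j) - 1)).card := by
        conv_lhs => rw [hk]
        exact code_per hf k (rres n j)
      rw [hper]
      have hle := Finset.le_sup' (fun i => ((Uc f C i (f i - 1)).card : ℤ)) (rres_mem hn j)
      rw [hi₀] at hle
      exact_mod_cast hle
    by_cases hbcase : (Lc f C i₀ (f i₀ - 1)).card ≤ 1
    · have hid := hkey i₀ (f i₀ - 1)
      have hb1 : 1 ≤ (Lc f C i₀ (f i₀ - 1)).card :=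
        Finset.card_pos.mpr ⟨i₀, bF_mem hC1 i₀⟩
      have heq : ((Uc f C i₀ (f i₀ - 1)).card : ℤ) = f i₀ - i₀ := by omega
      rw [heq]
      exact Finset.le_sup' (fun i => f i - i) hi₀mem
    · exfalso
      push_neg at hbcase
      have hi₀Lc : i₀ ∈ Lc f C i₀ (f i₀ - 1) := bF_mem hC1 i₀
      set E := (Lc f C i₀ (f i₀ - 1)).erase i₀ with hE
      have hEne : E.Nonempty := by
        rw [← Finset.card_pos, hE, Finset.card_erase_of_mem hi₀Lc]
        omega
      set j₀ := E.max' hEne with hj₀def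
      have hj₀E : j₀ ∈ E := Finset.max'_mem _ _
      rw [hE, Finset.mem_erase] at hj₀E
      obtain ⟨hj₀ne, hj₀Lc⟩ := hj₀E
      simp only [Lc, Finset.mem_filter, Finset.mem_Ioc] at hj₀Lc
      have hfj₀ : f i₀ < f j₀ := by
        rcases lt_or_eq_of_le (by omega : f i₀ ≤ f j₀) with h | h
        · exact h
        · exact absurd (f.injective h.symm) (by omega)
      have hj₀lt : j₀ < i₀ := by
        rcases lt_or_eq_of_le hj₀Lc.1.2 with h | h
        · exact h
        · exact absurd h hj₀ne
      have hbet : ∀ x : ℤ, j₀ < x → x < i₀ → f x < f i₀ := by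
        intro x h1 h2
        by_contra h
        push_neg at h
        have hxE : x ∈ E := by
          rw [hE, Finset.mem_erase]
          refine ⟨by omega, ?_⟩
          simp only [Lc, Finset.mem_filter, Finset.mem_Ioc]
          have := hC2 x
          omega
        have := Finset.le_max' E x hxE
        rw [← hj₀def] at this
        omega
      have hsub : (Uc f C i₀ (f i₀ - 1)) ∪ Finset.Ioc j₀ i₀ ⊆ Uc f C j₀ (f j₀ - 1) := by
        intro x hx
        rcases Finset.mem_union.mp hx with hx | hx
        · simp only [Uc, Finset.mem_filter, Finset.mem_Ioc] at hx ⊢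
          have := hC2 x
          omega
        · simp only [Finset.mem_Ioc] at hx
          simp only [Uc, Finset.mem_filter, Finset.mem_Ioc]
          have hfx : f x < f j₀ := by
            rcases lt_or_eq_of_le hx.2 with h | h
            · exact lt_trans (hbet x hx.1 h) hfj₀
            · rw [h]; exact hfj₀
          have := hC2 x
          omega
      have hdisj : Disjoint (Uc f C i₀ (f i₀ - 1)) (Finset.Ioc j₀ i₀) := by
        rw [Finset.disjoint_left]
        intro a ha hb
        simp only [Uc, Finset.mem_filter, Finset.mem_Ioc] at ha
        simp only [Finset.mem_Ioc] at hb
        omega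
      have hcard := Finset.card_le_card hsub
      rw [Finset.card_union_of_disjoint hdisj, Int.card_Ioc] at hcard
      have hglobj := hglob j₀
      omega

end KeyMain

section Final

variable {n : ℕ} {f : ℤ ≃ ℤ}

lemma disp_rres (hn : 1 ≤ n) (hf : ∀ i : ℤ, f (i + n) = f i + n) (x : ℤ) :
    f x - x = f (rres n x) - rres n x := by
  obtain ⟨k, hk⟩ := rres_spec n hn x
  conv_lhs => rw [hk, fk hf k]
  ring

/-- displacement of the inverse at `f i` is minus displacement at `i` -/
lemma symm_disp (hn : 1 ≤ n) (hf : ∀ i : ℤ, f (i + n) = f i + n) (x : ℤ) :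
    f.symm x - x = f.symm (rres n x) - rres n x := by
  obtain ⟨k, hk⟩ := rres_spec n hn x
  conv_lhs => rw [hk, fk_symm hf k]
  ring

lemma hf_symm' (hf : ∀ i : ℤ, f (i + n) = f i + n) :
    ∀ i : ℤ, f.symm (i + n) = f.symm i + n := by
  intro i
  have := fk_symm hf 1 i
  simpa using this

lemma h0_symm (hn : 1 ≤ n) (hf : ∀ i : ℤ, f (i + n) = f i + n)
    (h0 : ∑ i ∈ Finset.Icc (1 : ℤ) n, (f i - i) = 0) :
    ∑ v ∈ Finset.Icc (1 : ℤ) n, (f.symm v - v) = 0 := by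
  have hstep : ∑ v ∈ Finset.Icc (1 : ℤ) n, (f.symm v - v)
      = ∑ i ∈ Finset.Icc (1 : ℤ) n, (i - f i) := by
    apply Finset.sum_nbij' (fun v => rres n (f.symm v)) (fun i => rres n (f i))
    · intro a _
      exact rres_mem hn _
    · intro a _
      exact rres_mem hn _
    · intro a ha
      obtain ⟨k, hk⟩ := rres_spec n hn (f.symm a)
      have h1 : rres n (f.symm a) = f.symm a - k * n := by omega
      have h2 : f (f.symm a - k * n) = a - k * n := by
        have := fk hf (-k) (f.symm a)
        have he : f.symm a + (-k) * n = f.symm a - k * n := by ring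
        rw [he] at this
        rw [this]
        simp; ring
      rw [h1, h2]
      have : a - k * n = a + (-k) * n := by ring
      rw [this, rres_per]
      exact rres_fix ha
    · intro a ha
      obtain ⟨k, hk⟩ := rres_spec n hn (f a)
      have h1 : rres n (f a) = f a - k * n := by omega
      have h2 : f.symm (f a - k * n) = a - k * n := by
        have := fk_symm hf (-k) (f a)
        have he : f a + (-k) * n = f a - k * n := by ring
        rw [he] at this
        rw [this]
        simp; ring
      rw [h1, h2]
      have : a - k * n = a + (-k) * n := by ring
      rw [this, rres_per]
      exact rres_fix ha
    · intro a ha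
      obtain ⟨k, hk⟩ := rres_spec n hn (f.symm a)
      have h1 : rres n (f.symm a) = f.symm a - k * n := by omega
      have h2 : f (f.symm a - k * n) = a - k * n := by
        have := fk hf (-k) (f.symm a)
        have he : f.symm a + (-k) * n = f.symm a - k * n := by ring
        rw [he] at this
        rw [this]
        simp; ring
      rw [h1, h2]
      ring
  rw [hstep]
  rw [Finset.sum_sub_distrib] at h0 ⊢
  omega

end Final

end Stmt4

/-- For an affine permutation `f` of quasi-period `n` with
`∑_{i=1}^n (f i - i) = 0`, the maximum of `f i - i` over `i ∈ [1,n]` equals the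
maximum of the code `cᵢ(f)`, and the minimum of `f i - i` equals minus the
maximum of the code of `f⁻¹`. -/
theorem stmt4 (n : ℕ) (hn : 1 ≤ n) (f : ℤ ≃ ℤ)
    (hf : ∀ i : ℤ, f (i + n) = f i + n)
    (h0 : ∑ i ∈ Finset.Icc (1 : ℤ) n, (f i - i) = 0) :
    (Finset.Icc (1 : ℤ) n).sup'
        ⟨1, by rw [Finset.mem_Icc]; exact ⟨le_refl 1, by exact_mod_cast hn⟩⟩
        (fun i => f i - i) =
      (Finset.Icc (1 : ℤ) n).sup'
        ⟨1, by rw [Finset.mem_Icc]; exact ⟨le_refl 1, by exact_mod_cast hn⟩⟩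
        (fun i => ({j : ℤ | i < j ∧ f j < f i}.ncard : ℤ)) ∧
    (Finset.Icc (1 : ℤ) n).inf'
        ⟨1, by rw [Finset.mem_Icc]; exact ⟨le_refl 1, by exact_mod_cast hn⟩⟩
        (fun i => f i - i) =
      -(Finset.Icc (1 : ℤ) n).sup'
        ⟨1, by rw [Finset.mem_Icc]; exact ⟨le_refl 1, by exact_mod_cast hn⟩⟩
        (fun i => ({j : ℤ | i < j ∧ f.symm j < f.symm i}.ncard : ℤ)) := by
  have ne : (Finset.Icc (1 : ℤ) n).Nonempty :=
    ⟨1, by rw [Finset.mem_Icc]; exact ⟨le_refl 1, by exact_mod_cast hn⟩⟩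
  have hf' : ∀ i : ℤ, f.symm (i + n) = f.symm i + n := Stmt4.hf_symm' hf
  have h0' : ∑ v ∈ Finset.Icc (1 : ℤ) n, (f.symm v - v) = 0 := Stmt4.h0_symm hn hf h0
  constructor
  · exact Stmt4.main n hn f hf h0 ne
  · -- second part
    have hmain2 := Stmt4.main n hn f.symm hf' h0' ne
    have hinf : (Finset.Icc (1 : ℤ) n).inf' ne (fun i => f i - i)
        = -(Finset.Icc (1 : ℤ) n).sup' ne (fun v => f.symm v - v) := by
      apply le_antisymm
      · obtain ⟨v₀, hv₀mem, hA⟩ :=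
          Finset.exists_mem_eq_sup' ne (fun v => f.symm v - v)
        have hi₁mem := Stmt4.rres_mem hn (f.symm v₀)
        have hval : f (Stmt4.rres n (f.symm v₀)) - Stmt4.rres n (f.symm v₀)
            = -(f.symm v₀ - v₀) := by
          obtain ⟨k, hk⟩ := Stmt4.rres_spec n hn (f.symm v₀)
          have h1 : Stmt4.rres n (f.symm v₀) = f.symm v₀ - k * n := by omega
          have h2 : f (f.symm v₀ - k * n) = v₀ - k * n := by
            have := Stmt4.fk hf (-k) (f.symm v₀)
            have he : f.symm v₀ + (-k) * n = f.symm v₀ - k * n := by ring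
            rw [he] at this
            rw [this]
            simp; ring
          rw [h1, h2]
          ring
        have := Finset.inf'_le (fun i => f i - i) hi₁mem
        rw [hval] at this
        rw [hA]
        exact this
      · apply Finset.le_inf'
        intro i hi
        have hval : i - f i = f.symm (Stmt4.rres n (f i)) - Stmt4.rres n (f i) := by
          obtain ⟨k, hk⟩ := Stmt4.rres_spec n hn (f i)
          have h1 : Stmt4.rres n (f i) = f i - k * n := by omega
          have h2 : f.symm (f i - k * n) = i - k * n := by
            have := Stmt4.fk_symm hf (-k) (f i)
            have he : f i + (-k) * n = f i - k * n := by ring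
            rw [he] at this
            rw [this]
            simp; ring
          rw [h1, h2]
          ring
        have hle := Finset.le_sup' (fun v => f.symm v - v)
          (Stmt4.rres_mem hn (f i))
        rw [← hval] at hle
        omega
    rw [hinf, hmain2]
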